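/- arXiv:0904.0898 — 3 statements merged into one kernel-verified Lean document; each statement's English description precedes it below -/
import Mathlib

section
/- Let (φ_n)_{n∈J} be an (A₁,B₁)-frame of a Hilbert space H₁ and (ψ_m)_{m∈K} be an (A₂,B₂)-frame of a Hilbert space H₂, with 0 < A_i ≤ B_i < ∞. Then the family (φ_n ⊗ ψ_m)_{(n,m)∈J×K} is an (A₁A₂, B₁B₂)-frame of the Hilbert tensor product H₁ ⊗ H₂. -/
open MeasureTheory

noncomputable section

/-- `(φ_n)_{n ∈ J}` is an `(A, B)`-frame of the Hilbert space `H`: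
`A‖f‖² ≤ Σ_n |⟨φ_n, f⟩|² ≤ B‖f‖²` for all `f ∈ H` (with the sum convergent). -/
def IsFrame {H : Type*} [NormedAddCommGroup H] [InnerProductSpace ℂ H]
    {J : Type*} (A B : ℝ) (φ : J → H) : Prop :=
  ∀ f : H, Summable (fun n : J => ‖(inner ℂ (φ n) f : ℂ)‖ ^ 2) ∧
    A * ‖f‖ ^ 2 ≤ ∑' n : J, ‖(inner ℂ (φ n) f : ℂ)‖ ^ 2 ∧
    ∑' n : J, ‖(inner ℂ (φ n) f : ℂ)‖ ^ 2 ≤ B * ‖f‖ ^ 2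

open scoped ENNReal

local notation "⟪" x ", " y "⟫" => (inner ℂ x y : ℂ)

lemma re_inner_self_eq {H : Type*} [NormedAddCommGroup H] [InnerProductSpace ℂ H] (x : H) :
    (inner ℂ x x : ℂ).re = ‖x‖ ^ 2 := by
  rw [← RCLike.re_to_complex]
  exact inner_self_eq_norm_sq x

theorem tensor_frame_aux {H₁ H₂ H₃ : Type*}
    [NormedAddCommGroup H₁] [InnerProductSpace ℂ H₁] [CompleteSpace H₁]
    [NormedAddCommGroup H₂] [InnerProductSpace ℂ H₂] [CompleteSpace H₂]
    [NormedAddCommGroup H₃] [InnerProductSpace ℂ H₃] [CompleteSpace H₃]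
    {J K : Type*} (A₁ B₁ A₂ B₂ : ℝ)
    (hA₁ : 0 ≤ A₁) (hA₂ : 0 ≤ A₂) (hB₁ : 0 ≤ B₁) (hB₂ : 0 ≤ B₂)
    (tmul : H₁ →ₗ[ℂ] H₂ →ₗ[ℂ] H₃)
    (htmul : ∀ (x x' : H₁) (y y' : H₂),
      (inner ℂ (tmul x y) (tmul x' y') : ℂ) = inner ℂ x x' * inner ℂ y y')
    (φ : J → H₁) (ψ : K → H₂)
    (hφ : IsFrame A₁ B₁ φ) (hψ : IsFrame A₂ B₂ ψ)
    (N : ℕ) (X : Fin N → H₁) (Y : Fin N → H₂) (f : H₃)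
    (hf : f = ∑ i, tmul (X i) (Y i)) :
    Summable (fun p : J × K => ‖⟪tmul (φ p.1) (ψ p.2), f⟫‖ ^ 2) ∧
      A₁ * A₂ * ‖f‖ ^ 2 ≤ ∑' p : J × K, ‖⟪tmul (φ p.1) (ψ p.2), f⟫‖ ^ 2 ∧
      ∑' p : J × K, ‖⟪tmul (φ p.1) (ψ p.2), f⟫‖ ^ 2 ≤ B₁ * B₂ * ‖f‖ ^ 2 := by
  obtain ⟨w, b, -⟩ := exists_hilbertBasis ℂ H₂
  set g : J → H₂ := fun n => ∑ i, ⟪φ n, X i⟫ • Y i with hg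
  set u : w → H₁ := fun k => ∑ i, ⟪(b k : H₂), Y i⟫ • X i with hu
  -- the tensor coefficients factor through `g`
  have hgf : ∀ (n : J) (m : K), ⟪tmul (φ n) (ψ m), f⟫ = ⟪ψ m, g n⟫ := by
    intro n m
    simp only [hf, hg, inner_sum, inner_smul_right, htmul]
  have hbg : ∀ (k : w) (n : J), ⟪(b k : H₂), g n⟫ = ⟪φ n, u k⟫ := by
    intro k n
    simp only [hg, hu, inner_sum, inner_smul_right]
    exact Finset.sum_congr rfl fun i _ => mul_comm _ _
  -- ∑ₖ ‖u k‖² = ‖f‖²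
  have hcu : HasSum (fun k : w => (⟪u k, u k⟫ : ℂ)) ⟪f, f⟫ := by
    have expand : ∀ k : w, (⟪u k, u k⟫ : ℂ) =
        ∑ i, ∑ j, ⟪Y i, (b k : H₂)⟫ * ⟪(b k : H₂), Y j⟫ * ⟪X i, X j⟫ := by
      intro k
      simp only [hu]
      rw [sum_inner]
      refine Finset.sum_congr rfl fun i _ => ?_
      rw [inner_smul_left, inner_sum, Finset.mul_sum]
      refine Finset.sum_congr rfl fun j _ => ?_
      rw [inner_smul_right, inner_conj_symm]
      ring
    have h2 : (⟪f, f⟫ : ℂ) = ∑ i, ∑ j, ⟪Y i, Y j⟫ * ⟪X i, X j⟫ := by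
      rw [hf, sum_inner]
      refine Finset.sum_congr rfl fun i _ => ?_
      rw [inner_sum]
      refine Finset.sum_congr rfl fun j _ => ?_
      rw [htmul]; ring
    rw [h2, funext expand]
    refine hasSum_sum fun i _ => hasSum_sum fun j _ => ?_
    exact (b.hasSum_inner_mul_inner (Y i) (Y j)).mul_right ⟪X i, X j⟫
  have hnu : HasSum (fun k : w => ‖u k‖ ^ 2) (‖f‖ ^ 2) := by
    have h := hcu.mapL Complex.reCLM
    simp only [Complex.reCLM_apply, re_inner_self_eq] at h
    exact h
  -- Parseval for `g n` via the basis, transported through `hbg`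
  have hgpar : ∀ n : J, HasSum (fun k : w => ‖⟪φ n, u k⟫‖ ^ 2) (‖g n‖ ^ 2) := by
    intro n
    have h := (b.hasSum_inner_mul_inner (g n) (g n)).mapL Complex.reCLM
    have heq : ∀ k : w, Complex.reCLM (⟪g n, (b k : H₂)⟫ * ⟪(b k : H₂), g n⟫)
        = ‖⟪φ n, u k⟫‖ ^ 2 := by
      intro k
      rw [hbg k n, ← inner_conj_symm (g n) ((b k : H₂)), hbg k n, RCLike.conj_mul]
      simp [← Complex.ofReal_pow]
    rw [funext heq] at h
    simpa only [Complex.reCLM_apply, re_inner_self_eq] using h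
  -- summability of the double family over `w × J`
  have hFnonneg : ∀ q : w × J, 0 ≤ ‖⟪φ q.2, u q.1⟫‖ ^ 2 := fun q => sq_nonneg _
  have hF : Summable (fun q : w × J => ‖⟪φ q.2, u q.1⟫‖ ^ 2) := by
    rw [summable_prod_of_nonneg hFnonneg]
    refine ⟨fun k => (hφ (u k)).1, ?_⟩
    refine Summable.of_nonneg_of_le (fun k => tsum_nonneg fun n => sq_nonneg _)
      (fun k => (hφ (u k)).2.2) (hnu.summable.mul_left B₁)
  -- ‖g n‖² summable and its sum is between A₁‖f‖² and B₁‖f‖²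
  have hgn_eq : ∀ n, ‖g n‖ ^ 2 = ∑' k : w, ‖⟪φ n, u k⟫‖ ^ 2 := fun n => (hgpar n).tsum_eq.symm
  have hFswap : Summable (fun q : J × w => ‖⟪φ q.1, u q.2⟫‖ ^ 2) := by
    have h := (Equiv.prodComm J (↑w : Type _)).summable_iff
      (f := fun q : w × J => ‖⟪φ q.2, u q.1⟫‖ ^ 2)
    exact h.mpr hF
  have hgsum : Summable (fun n : J => ‖g n‖ ^ 2) := by
    simp only [hgn_eq]
    exact ((summable_prod_of_nonneg (fun q => sq_nonneg _)).mp hFswap).2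
  have hStsum : ∑' n : J, ‖g n‖ ^ 2 = ∑' k : w, ∑' n : J, ‖⟪φ n, u k⟫‖ ^ 2 := by
    simp only [hgn_eq]
    rw [← Summable.tsum_prod' hFswap fun n => (hgpar n).summable,
      ← Summable.tsum_prod' hF fun k => (hφ (u k)).1]
    have h := (Equiv.prodComm J (↑w : Type _)).tsum_eq (fun q : w × J => ‖⟪φ q.2, u q.1⟫‖ ^ 2)
    simpa using h
  have hS_le : ∑' n : J, ‖g n‖ ^ 2 ≤ B₁ * ‖f‖ ^ 2 := by
    rw [hStsum, ← hnu.tsum_eq, ← tsum_mul_left]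
    exact Summable.tsum_le_tsum (fun k => (hφ (u k)).2.2)
      ((summable_prod_of_nonneg hFnonneg).mp hF).2 (hnu.summable.mul_left B₁)
  have hS_ge : A₁ * ‖f‖ ^ 2 ≤ ∑' n : J, ‖g n‖ ^ 2 := by
    rw [hStsum, ← hnu.tsum_eq, ← tsum_mul_left]
    exact Summable.tsum_le_tsum (fun k => (hφ (u k)).2.1) (hnu.summable.mul_left A₁)
      ((summable_prod_of_nonneg hFnonneg).mp hF).2
  -- main family
  have hMeq : (fun p : J × K => ‖⟪tmul (φ p.1) (ψ p.2), f⟫‖ ^ 2)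
      = fun p : J × K => ‖⟪ψ p.2, g p.1⟫‖ ^ 2 := by
    funext p; rw [hgf p.1 p.2]
  have hMnonneg : ∀ p : J × K, 0 ≤ ‖⟪ψ p.2, g p.1⟫‖ ^ 2 := fun p => sq_nonneg _
  have hM : Summable (fun p : J × K => ‖⟪ψ p.2, g p.1⟫‖ ^ 2) := by
    rw [summable_prod_of_nonneg hMnonneg]
    refine ⟨fun n => (hψ (g n)).1, ?_⟩
    exact Summable.of_nonneg_of_le (fun n => tsum_nonneg fun m => sq_nonneg _)
      (fun n => (hψ (g n)).2.2) (hgsum.mul_left B₂)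
  have hMtsum : ∑' p : J × K, ‖⟪ψ p.2, g p.1⟫‖ ^ 2 = ∑' n, ∑' m, ‖⟪ψ m, g n⟫‖ ^ 2 :=
    Summable.tsum_prod' hM fun n => (hψ (g n)).1
  refine ⟨by rw [hMeq]; exact hM, ?_, ?_⟩
  · rw [hMeq, hMtsum]
    calc A₁ * A₂ * ‖f‖ ^ 2 = A₂ * (A₁ * ‖f‖ ^ 2) := by ring
    _ ≤ A₂ * ∑' n, ‖g n‖ ^ 2 := by
        exact mul_le_mul_of_nonneg_left hS_ge hA₂
    _ = ∑' n, A₂ * ‖g n‖ ^ 2 := tsum_mul_left.symm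
    _ ≤ ∑' n, ∑' m, ‖⟪ψ m, g n⟫‖ ^ 2 :=
        Summable.tsum_le_tsum (fun n => (hψ (g n)).2.1) (hgsum.mul_left A₂)
          ((summable_prod_of_nonneg hMnonneg).mp hM).2
  · rw [hMeq, hMtsum]
    calc ∑' n, ∑' m, ‖⟪ψ m, g n⟫‖ ^ 2 ≤ ∑' n, B₂ * ‖g n‖ ^ 2 :=
        Summable.tsum_le_tsum (fun n => (hψ (g n)).2.2)
          ((summable_prod_of_nonneg hMnonneg).mp hM).2 (hgsum.mul_left B₂)
    _ = B₂ * ∑' n, ‖g n‖ ^ 2 := tsum_mul_left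
    _ ≤ B₂ * (B₁ * ‖f‖ ^ 2) := mul_le_mul_of_nonneg_left hS_le hB₂
    _ = B₁ * B₂ * ‖f‖ ^ 2 := by ring


/-- Tensor product of an `(A₁,B₁)`-frame of `H₁` with an `(A₂,B₂)`-frame of `H₂`
is an `(A₁A₂, B₁B₂)`-frame of the Hilbert tensor product `H₁ ⊗ H₂`.  The completed
Hilbert tensor product is encoded as a Hilbert space `H₃` together with a bilinear map
`tmul` satisfying `⟨x ⊗ y, x' ⊗ y'⟩ = ⟨x,x'⟩⟨y,y'⟩` whose elementary tensors span a
dense subspace. -/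
theorem tensor_frame {H₁ H₂ H₃ : Type*}
    [NormedAddCommGroup H₁] [InnerProductSpace ℂ H₁] [CompleteSpace H₁]
    [NormedAddCommGroup H₂] [InnerProductSpace ℂ H₂] [CompleteSpace H₂]
    [NormedAddCommGroup H₃] [InnerProductSpace ℂ H₃] [CompleteSpace H₃]
    {J K : Type*} (A₁ B₁ A₂ B₂ : ℝ)
    (hA₁ : 0 < A₁) (hAB₁ : A₁ ≤ B₁) (hA₂ : 0 < A₂) (hAB₂ : A₂ ≤ B₂)
    (tmul : H₁ →ₗ[ℂ] H₂ →ₗ[ℂ] H₃)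
    (htmul : ∀ (x x' : H₁) (y y' : H₂),
      (inner ℂ (tmul x y) (tmul x' y') : ℂ) = inner ℂ x x' * inner ℂ y y')
    (hdense : (Submodule.span ℂ {z : H₃ | ∃ x y, z = tmul x y}).topologicalClosure = ⊤)
    (φ : J → H₁) (ψ : K → H₂)
    (hφ : IsFrame A₁ B₁ φ) (hψ : IsFrame A₂ B₂ ψ) :
    IsFrame (A₁ * A₂) (B₁ * B₂) (fun p : J × K => tmul (φ p.1) (ψ p.2)) := by
  set s := Submodule.span ℂ {z : H₃ | ∃ x y, z = tmul x y} with hs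
  -- the frame inequalities on the dense subspace `s`
  have key : ∀ f : H₃, f ∈ s →
      Summable (fun p : J × K => ‖⟪tmul (φ p.1) (ψ p.2), f⟫‖ ^ 2) ∧
      A₁ * A₂ * ‖f‖ ^ 2 ≤ ∑' p : J × K, ‖⟪tmul (φ p.1) (ψ p.2), f⟫‖ ^ 2 ∧
      ∑' p : J × K, ‖⟪tmul (φ p.1) (ψ p.2), f⟫‖ ^ 2 ≤ B₁ * B₂ * ‖f‖ ^ 2 := by
    intro f hf
    rw [hs, Submodule.mem_span_set'] at hf
    obtain ⟨N, c, v, hv⟩ := hf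
    choose x y hxy using fun i => (v i).2
    refine tensor_frame_aux A₁ B₁ A₂ B₂ hA₁.le hA₂.le (hA₁.trans_le hAB₁).le
      (hA₂.trans_le hAB₂).le tmul htmul φ ψ hφ hψ N (fun i => c i • x i) y f ?_
    rw [← hv]
    refine Finset.sum_congr rfl fun i _ => ?_
    rw [_root_.map_smul, LinearMap.smul_apply, hxy i]
  haveI : Fact ((1:ℝ≥0∞) ≤ 2) := ⟨one_le_two⟩
  have h2 : (0:ℝ) < (2:ℝ≥0∞).toReal := by norm_num
  have hpow : ∀ r : ℝ, r ^ (2:ℝ≥0∞).toReal = r ^ 2 := by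
    intro r
    rw [show ((2:ℝ≥0∞)).toReal = ((2:ℕ):ℝ) by norm_num, Real.rpow_natCast]
  have hdense' : Dense (s : Set H₃) :=
    Submodule.dense_iff_topologicalClosure_eq_top.mpr hdense
  -- the analysis operator on `s`, valued in `ℓ²(J × K)`
  have hmem : ∀ f : s, Memℓp (fun p : J × K => ⟪tmul (φ p.1) (ψ p.2), (f : H₃)⟫) 2 := by
    intro f
    apply memℓp_gen
    simp only [hpow]
    exact (key f f.2).1
  set T₀ : s →ₗ[ℂ] lp (fun _ : J × K => ℂ) 2 :=
    { toFun := fun f => ⟨fun p => ⟪tmul (φ p.1) (ψ p.2), (f : H₃)⟫, hmem f⟩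
      map_add' := by
        intro a b
        apply lp.ext
        rw [lp.coeFn_add]
        funext p
        simp [inner_add_right]
      map_smul' := by
        intro c a
        apply lp.ext
        rw [lp.coeFn_smul]
        funext p
        simp [inner_smul_right] } with hT₀
  -- norm bound on `s`
  have hBB : (0:ℝ) ≤ B₁ * B₂ :=
    mul_nonneg (hA₁.trans_le hAB₁).le (hA₂.trans_le hAB₂).le
  have hT₀bound : ∀ f : s, ‖T₀ f‖ ≤ Real.sqrt (B₁ * B₂) * ‖f‖ := by
    intro f
    rw [lp.norm_eq_tsum_rpow h2]
    have hcoe : ∀ p : J × K, (T₀ f : ∀ _ : J × K, ℂ) p = ⟪tmul (φ p.1) (ψ p.2), (f : H₃)⟫ :=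
      fun p => rfl
    have hle : ∑' p : J × K, ‖(T₀ f : ∀ _ : J × K, ℂ) p‖ ^ (2:ℝ≥0∞).toReal
        ≤ B₁ * B₂ * ‖(f : H₃)‖ ^ 2 := by
      simp only [hpow, hcoe]
      exact (key f f.2).2.2
    calc (∑' p : J × K, ‖(T₀ f : ∀ _ : J × K, ℂ) p‖ ^ (2:ℝ≥0∞).toReal) ^ (1 / (2:ℝ≥0∞).toReal)
        ≤ (B₁ * B₂ * ‖(f : H₃)‖ ^ 2) ^ (1 / (2:ℝ≥0∞).toReal) := by
          apply Real.rpow_le_rpow (tsum_nonneg fun p => by positivity) hle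
          positivity
      _ = Real.sqrt (B₁ * B₂ * ‖(f : H₃)‖ ^ 2) := by
          rw [Real.sqrt_eq_rpow]
          norm_num
      _ = Real.sqrt (B₁ * B₂) * ‖f‖ := by
          rw [Real.sqrt_mul hBB, Real.sqrt_sq (norm_nonneg _)]
          rfl
  set T₀c : s →L[ℂ] lp (fun _ : J × K => ℂ) 2 :=
    T₀.mkContinuous (Real.sqrt (B₁ * B₂)) hT₀bound with hT₀c
  have hrange : DenseRange (s.subtypeL : s →L[ℂ] H₃) := by
    simpa [DenseRange, Subtype.range_coe] using hdense'
  have hui : IsUniformInducing (s.subtypeL : s →L[ℂ] H₃) :=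
    isometry_subtype_coe.isUniformInducing
  set T : H₃ →L[ℂ] lp (fun _ : J × K => ℂ) 2 := T₀c.extend s.subtypeL with hT
  have hTs : ∀ x : s, T (x : H₃) = T₀c x := fun x =>
    ContinuousLinearMap.extend_eq T₀c hrange hui x
  -- coordinate evaluation
  have hevmem : ∀ (z : lp (fun _ : J × K => ℂ) 2) (p : J × K), ‖(z : ∀ _ : J × K, ℂ) p‖ ≤ 1 * ‖z‖ :=
    fun z p => by simpa using lp.norm_apply_le_norm (by norm_num) z p
  set ev : (J × K) → (lp (fun _ : J × K => ℂ) 2 →L[ℂ] ℂ) := fun p =>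
    LinearMap.mkContinuous
      { toFun := fun z => (z : ∀ _ : J × K, ℂ) p
        map_add' := fun a b => by simp only [lp.coeFn_add, Pi.add_apply]
        map_smul' := fun c a => by simp only [lp.coeFn_smul, Pi.smul_apply, RingHom.id_apply,
          smul_eq_mul] }
      1 (fun z => hevmem z p) with hev
  have hcoord : ∀ (f : H₃) (p : J × K),
      (T f : ∀ _ : J × K, ℂ) p = ⟪tmul (φ p.1) (ψ p.2), f⟫ := by
    intro f p
    have hc1 : Continuous fun f : H₃ => ev p (T f) := (ev p).continuous.comp T.continuous
    have hc2 : Continuous fun f : H₃ => ⟪tmul (φ p.1) (ψ p.2), f⟫ :=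
      (innerSL ℂ (tmul (φ p.1) (ψ p.2))).continuous
    have heqon : Set.EqOn (fun f : H₃ => ev p (T f))
        (fun f : H₃ => ⟪tmul (φ p.1) (ψ p.2), f⟫) (s : Set H₃) := by
      intro f hf
      have h1 : T f = T₀c ⟨f, hf⟩ := hTs ⟨f, hf⟩
      show ev p (T f) = _
      rw [h1]
      rfl
    exact congrFun (Continuous.ext_on hdense' hc1 hc2 heqon) f
  -- summability and the value of the sum for arbitrary `f`
  have hsummable : ∀ f : H₃,
      Summable (fun p : J × K => ‖⟪tmul (φ p.1) (ψ p.2), f⟫‖ ^ 2) := by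
    intro f
    have hm := lp.memℓp (T f)
    rw [memℓp_gen_iff h2] at hm
    simp only [hpow, hcoord f] at hm
    exact hm
  have hnormT : ∀ f : H₃, ‖T f‖ ^ 2 = ∑' p : J × K, ‖⟪tmul (φ p.1) (ψ p.2), f⟫‖ ^ 2 := by
    intro f
    have := lp.norm_rpow_eq_tsum h2 (T f)
    simp only [hpow, hcoord f] at this
    exact this
  -- bounds extend by density
  have hupper : ∀ f : H₃,
      ∑' p : J × K, ‖⟪tmul (φ p.1) (ψ p.2), f⟫‖ ^ 2 ≤ B₁ * B₂ * ‖f‖ ^ 2 := by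
    intro f
    rw [← hnormT f]
    have hclosed : IsClosed {f : H₃ | ‖T f‖ ^ 2 ≤ B₁ * B₂ * ‖f‖ ^ 2} :=
      isClosed_le ((T.continuous.norm).pow 2) (continuous_const.mul (continuous_norm.pow 2))
    have hsub : (s : Set H₃) ⊆ {f : H₃ | ‖T f‖ ^ 2 ≤ B₁ * B₂ * ‖f‖ ^ 2} := by
      intro f hf
      show ‖T f‖ ^ 2 ≤ B₁ * B₂ * ‖f‖ ^ 2
      rw [hnormT f]
      exact (key f hf).2.2
    have := hclosed.closure_subset_iff.mpr hsub
    rw [hdense'.closure_eq] at this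
    exact this (Set.mem_univ f)
  have hlower : ∀ f : H₃,
      A₁ * A₂ * ‖f‖ ^ 2 ≤ ∑' p : J × K, ‖⟪tmul (φ p.1) (ψ p.2), f⟫‖ ^ 2 := by
    intro f
    rw [← hnormT f]
    have hclosed : IsClosed {f : H₃ | A₁ * A₂ * ‖f‖ ^ 2 ≤ ‖T f‖ ^ 2} :=
      isClosed_le (continuous_const.mul (continuous_norm.pow 2)) ((T.continuous.norm).pow 2)
    have hsub : (s : Set H₃) ⊆ {f : H₃ | A₁ * A₂ * ‖f‖ ^ 2 ≤ ‖T f‖ ^ 2} := by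
      intro f hf
      show A₁ * A₂ * ‖f‖ ^ 2 ≤ ‖T f‖ ^ 2
      rw [hnormT f]
      exact (key f hf).2.1
    have := hclosed.closure_subset_iff.mpr hsub
    rw [hdense'.closure_eq] at this
    exact this (Set.mem_univ f)
  exact fun f => ⟨hsummable f, hlower f, hupper f⟩
end
end

section
/- The Gabor system { x ↦ e^{2πi m x} g(x − n) : m,n ∈ ℤ }, where g(x) = sin(πx)/(πx) (extended by g(0)=1), is an orthonormal family in L²(ℝ). -/
open MeasureTheory Complex Real

noncomputable section

abbrev L2R := Lp ℂ 2 (volume : Measure ℝ)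

/-- The sinc function `g(x) = sin(πx)/(πx)`, with `g(0) = 1`. -/
def sinc (x : ℝ) : ℝ := if x = 0 then 1 else Real.sin (π * x) / (π * x)

open scoped ENNReal
open AddCircle

def phi (y : ℝ) : ℂ := ∫ t in (0:ℝ)..1, Complex.exp (2 * π * Complex.I * y * t)

lemma sinc_int (k : ℤ) : _root_.sinc k = if k = 0 then 1 else 0 := by
  rcases eq_or_ne k 0 with h | h
  · simp [h, _root_.sinc]
  · have hk : (k : ℝ) ≠ 0 := Int.cast_ne_zero.mpr h
    simp [_root_.sinc, hk, h, mul_comm π (k:ℝ), Real.sin_int_mul_pi]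

/-- `φ y = ∫_0^1 e^{2πiyt} dt`. -/

lemma measurable_sinc : Measurable _root_.sinc := by
  unfold _root_.sinc
  exact Measurable.ite (measurableSet_eq_fun measurable_id measurable_const)
    measurable_const ((Real.measurable_sin.comp (measurable_const.mul measurable_id)).div
      (measurable_const.mul measurable_id))

lemma phi_eq (y : ℝ) : phi y = Complex.exp (π * Complex.I * y) * (_root_.sinc y : ℂ) := by
  rcases eq_or_ne y 0 with rfl | hy
  · simp [phi, _root_.sinc]
  · have hy' : (y : ℂ) ≠ 0 := Complex.ofReal_ne_zero.mpr hy
    have hπ : (π : ℂ) ≠ 0 := Complex.ofReal_ne_zero.mpr Real.pi_ne_zero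
    have hc : (2 * π * Complex.I * y) ≠ 0 := by
      simp [hπ, hy', Complex.I_ne_zero]
    have h1 : phi y = (Complex.exp (2 * π * Complex.I * y)
        - 1) / (2 * π * Complex.I * y) := by
      rw [phi, integral_exp_mul_complex hc]
      simp
    rw [h1]
    have hsin : (Real.sin (π * y) : ℂ) = Complex.sin (π * y) := by push_cast; rfl
    have hsinc : (_root_.sinc y : ℂ) = Complex.sin (π * y) / (π * y) := by
      rw [_root_.sinc, if_neg hy]; push_cast; rfl
    rw [hsinc]
    rw [Complex.sin]
    set a := Complex.exp (π * Complex.I * y) with ha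
    have ha0 : a ≠ 0 := Complex.exp_ne_zero _
    have he3 : Complex.exp ((π : ℂ) * y * Complex.I) = a := by rw [ha]; ring_nf
    have hb : Complex.exp (-((π : ℂ) * y * Complex.I)) = a⁻¹ := by
      rw [Complex.exp_neg, he3]
    have haa : Complex.exp (2 * π * Complex.I * y) = a * a := by
      rw [ha, ← Complex.exp_add]; ring_nf
    rw [haa]
    field_simp
    rw [Complex.exp_neg, ← ha]
    field_simp
    ring_nf
    simp [Complex.I_sq]
    ring

local instance : Fact ((0:ℝ) < 1) := ⟨one_pos⟩

def ef (y : ℝ) : ℝ → ℂ := fun t => Complex.exp (2 * π * Complex.I * y * t)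

lemma norm_ef (y t : ℝ) : ‖ef y t‖ = 1 := by
  have h : (2 * (π:ℂ) * Complex.I * y * t) = ((2 * π * y * t : ℝ) : ℂ) * Complex.I := by
    push_cast; ring
  rw [ef, h, Complex.norm_exp_ofReal_mul_I]

lemma measurable_ef (y : ℝ) : Measurable (ef y) :=
  (Complex.continuous_exp.comp (continuous_const.mul Complex.continuous_ofReal)).measurable

lemma measurable_lift (y : ℝ) : Measurable (AddCircle.liftIoc 1 0 (ef y)) := by
  exact ((measurable_ef y).comp measurable_subtype_coe).comp
    (AddCircle.measurableEquivIoc 1 0).measurable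

lemma memLp_lift (y : ℝ) : MemLp (AddCircle.liftIoc 1 0 (ef y)) 2 (haarAddCircle) := by
  refine MemLp.of_bound (measurable_lift y).aestronglyMeasurable 1 (ae_of_all _ fun q => ?_)
  rw [show AddCircle.liftIoc 1 0 (ef y) q = ef y ((AddCircle.equivIoc 1 0 q : ℝ)) from rfl,
    norm_ef]

lemma fourierCoeff_lift (y : ℝ) (n : ℤ) :
    fourierCoeff (AddCircle.liftIoc 1 0 (ef y)) n = phi (y - n) := by
  rw [fourierCoeff_eq_intervalIntegral _ n 0]
  rw [phi]
  norm_num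
  rw [intervalIntegral.integral_of_le zero_le_one, intervalIntegral.integral_of_le zero_le_one]
  refine setIntegral_congr_fun measurableSet_Ioc fun t ht => ?_
  rw [AddCircle.liftIoc_coe_apply (by simpa using ht)]
  rw [ef, ← Complex.exp_conj, ← Complex.exp_add]
  congr 1
  simp only [map_mul, Complex.conj_I, Complex.conj_ofReal, map_ofNat, map_intCast]
  ring

lemma fourierCoeff_memLp_toLp (f : AddCircle (1:ℝ) → ℂ) (hf : MemLp f 2 haarAddCircle) (n : ℤ) :
    fourierCoeff (⇑(hf.toLp f)) n = fourierCoeff f n := by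
  refine integral_congr_ae ((hf.coeFn_toLp).mono fun a ha => ?_)
  dsimp only
  rw [ha]

lemma integral_fourier (d : ℤ) :
    (∫ q : AddCircle (1:ℝ), fourier d q ∂haarAddCircle) = if d = 0 then 1 else 0 := by
  have h0 : (∫ q : AddCircle (1:ℝ), fourier d q ∂haarAddCircle)
      = fourierCoeff (fun q : AddCircle (1:ℝ) => fourier d q) 0 := by
    rw [fourierCoeff]
    simp
  rw [h0, fourierCoeff_eq_intervalIntegral _ 0 0]
  norm_num
  have h1 : (∫ x in (0:ℝ)..1, Complex.exp (2 * π * Complex.I * d * x)) = phi d := by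
    rw [phi]
    push_cast
    rfl
  rw [h1, phi_eq, sinc_int]
  rcases eq_or_ne d 0 with rfl | hd
  · simp
  · simp [hd]

lemma conj_lift_mul (x : ℝ) (d : ℤ) (q : AddCircle (1:ℝ)) :
    (starRingEnd ℂ) (AddCircle.liftIoc 1 0 (ef x) q) * AddCircle.liftIoc 1 0 (ef (x + d)) q
      = fourier d q := by
  have hq : (((AddCircle.equivIoc (1:ℝ) 0 q : Set.Ioc (0:ℝ) (0+1)) : ℝ) : AddCircle (1:ℝ)) = q :=
    (AddCircle.equivIoc (1:ℝ) 0).symm_apply_apply q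
  set t : ℝ := ((AddCircle.equivIoc (1:ℝ) 0 q : Set.Ioc (0:ℝ) (0+1)) : ℝ) with htdef
  rw [show AddCircle.liftIoc 1 0 (ef x) q = ef x t from rfl,
    show AddCircle.liftIoc 1 0 (ef (x + d)) q = ef (x + d) t from rfl,
    ← hq, fourier_coe_apply]
  rw [ef, ef, ← Complex.exp_conj, ← Complex.exp_add]
  congr 1
  simp only [map_mul, Complex.conj_I, Complex.conj_ofReal, map_ofNat]
  push_cast
  ring

lemma key (x : ℝ) (d : ℤ) :
    HasSum (fun n : ℤ => ((_root_.sinc (x - n) : ℂ) * (_root_.sinc (x - n + d) : ℂ)))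
      (if d = 0 then 1 else 0) := by
  have hfm := memLp_lift x
  have hgm := memLp_lift (x + d)
  set F2 := hfm.toLp _ with hF2
  set G2 := hgm.toLp _ with hG2
  have hFf : ∀ n : ℤ, fourierBasis.repr F2 n = phi (x - n) := fun n => by
    rw [fourierBasis_repr, fourierCoeff_memLp_toLp _ hfm _, fourierCoeff_lift]
  have hGg : ∀ n : ℤ, fourierBasis.repr G2 n = phi (x - n + d) := fun n => by
    rw [fourierBasis_repr, fourierCoeff_memLp_toLp _ hgm _, fourierCoeff_lift,
      show x + d - n = x - n + d by ring]
  -- inner product of F2 and G2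
  have hinner : (inner ℂ F2 G2 : ℂ) = if d = 0 then 1 else 0 := by
    rw [MeasureTheory.L2.inner_def, ← integral_fourier d]
    refine integral_congr_ae ?_
    filter_upwards [hfm.coeFn_toLp, hgm.coeFn_toLp] with q h1 h2
    rw [RCLike.inner_apply', h1, h2, conj_lift_mul]
  -- Parseval
  have hsum := lp.hasSum_inner (𝕜 := ℂ) (fourierBasis.repr F2) (fourierBasis.repr G2)
  rw [fourierBasis.repr.inner_map_map, hinner] at hsum
  have hterm : ∀ n : ℤ,
      (inner ℂ (fourierBasis.repr F2 n) (fourierBasis.repr G2 n) : ℂ)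
        = ((-1 : ℂ)^d) * ((_root_.sinc (x - n) : ℂ) * (_root_.sinc (x - n + d) : ℂ)) := by
    intro n
    rw [RCLike.inner_apply', hFf n, hGg n, phi_eq, phi_eq]
    simp only [map_mul, Complex.conj_ofReal, ← Complex.exp_conj, map_mul, Complex.conj_I,
      map_sub, map_ofNat, map_intCast]
    have hphase : Complex.exp ((π:ℂ) * -Complex.I * ((x - n : ℝ) : ℂ)) *
        Complex.exp ((π:ℂ) * Complex.I * ((x - n + d : ℝ) : ℂ)) = (-1 : ℂ)^d := by
      rw [← Complex.exp_add]
      rw [show (π:ℂ) * -Complex.I * ((x - n : ℝ) : ℂ) + (π:ℂ) * Complex.I * ((x - n + d : ℝ) : ℂ)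
          = (d : ℂ) * ((π:ℂ) * Complex.I) by push_cast; ring]
      rw [Complex.exp_int_mul, Complex.exp_pi_mul_I]
    calc Complex.exp ((π:ℂ) * -Complex.I * ((x - n : ℝ) : ℂ)) * (_root_.sinc (x - n) : ℂ) *
          (Complex.exp ((π:ℂ) * Complex.I * ((x - n + d : ℝ) : ℂ)) * (_root_.sinc (x - n + d) : ℂ))
        = (Complex.exp ((π:ℂ) * -Complex.I * ((x - n : ℝ) : ℂ)) *
            Complex.exp ((π:ℂ) * Complex.I * ((x - n + d : ℝ) : ℂ))) *
            ((_root_.sinc (x - n) : ℂ) * (_root_.sinc (x - n + d) : ℂ)) := by ring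
      _ = _ := by rw [hphase]
  simp only [hterm] at hsum
  have hc : ((-1:ℂ)^d) ≠ 0 := zpow_ne_zero _ (by norm_num)
  have h2 := hsum.mul_left (((-1:ℂ)^d)⁻¹)
  have h3 : (fun n : ℤ => (((-1:ℂ)^d)⁻¹ * (((-1:ℂ)^d) *
      ((_root_.sinc (x - n) : ℂ) * (_root_.sinc (x - n + d) : ℂ)))))
      = fun n : ℤ => ((_root_.sinc (x - n) : ℂ) * (_root_.sinc (x - n + d) : ℂ)) := by
    funext n; field_simp
  rw [h3] at h2
  have h4 : (((-1:ℂ)^d)⁻¹ * (if d = 0 then 1 else 0)) = if d = 0 then 1 else 0 := by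
    rcases eq_or_ne d 0 with rfl | hd
    · simp
    · simp [hd]
  rwa [h4] at h2

/-- The integrand of the inner product of two Gabor functions. -/
def gab (m n : ℤ) (y : ℝ) : ℂ := Complex.exp (2 * π * Complex.I * m * y) * (_root_.sinc (y - n) : ℂ)

def Phi (m n m' n' : ℤ) (y : ℝ) : ℂ := (starRingEnd ℂ) (gab m n y) * gab m' n' y

lemma measurable_gab (m n : ℤ) : Measurable (gab m n) := by
  unfold gab
  exact ((Complex.continuous_exp.comp (continuous_const.mul
    Complex.continuous_ofReal)).measurable).mul
    (Complex.measurable_ofReal.comp (measurable_sinc.comp (measurable_id.sub measurable_const)))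

lemma measurable_Phi (m n m' n' : ℤ) : Measurable (Phi m n m' n') :=
  (Complex.continuous_conj.measurable.comp (measurable_gab m n)).mul (measurable_gab m' n')

lemma hasSum_Phi (m n m' n' : ℤ) (x : ℝ) :
    HasSum (fun j : ℤ => Phi m n m' n' (x + j))
      (Complex.exp (2 * π * Complex.I * (m' - m) * x) * (if n = n' then 1 else 0)) := by
  have h0 := ((Equiv.subLeft n').hasSum_iff).mpr (key x (n' - n))
  have h1 := h0.mul_left (Complex.exp (2 * π * Complex.I * (m' - m) * x))
  have h2 : (if n' - n = 0 then (1:ℂ) else 0) = if n = n' then 1 else 0 := by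
    rcases eq_or_ne n n' with rfl | hne
    · simp
    · rw [if_neg hne, if_neg (fun h => hne (sub_eq_zero.mp h).symm)]
  rw [h2] at h1
  have hph : ∀ j : ℤ, (starRingEnd ℂ) (Complex.exp (2 * π * Complex.I * m * ((x : ℂ) + j)))
      * Complex.exp (2 * π * Complex.I * m' * ((x : ℂ) + j))
      = Complex.exp (2 * π * Complex.I * (m' - m) * x) := by
    intro j
    rw [← Complex.exp_conj, ← Complex.exp_add]
    have harg : (starRingEnd ℂ) (2 * π * Complex.I * m * ((x : ℂ) + j))
        + 2 * π * Complex.I * m' * ((x : ℂ) + j)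
        = 2 * π * Complex.I * (m' - m) * x + (((m' - m) * j : ℤ) : ℂ) * (2 * π * Complex.I) := by
      simp only [map_mul, map_add, Complex.conj_I, Complex.conj_ofReal, map_ofNat, map_intCast]
      push_cast
      ring
    rw [harg, Complex.exp_add, Complex.exp_int_mul_two_pi_mul_I, mul_one]
  have hpt : ∀ j : ℤ, Phi m n m' n' (x + j)
      = Complex.exp (2 * π * Complex.I * (m' - m) * x)
        * ((_root_.sinc (x + j - n') : ℂ) * (_root_.sinc (x + j - n) : ℂ)) := by
    intro j
    rw [Phi, gab, gab, map_mul, Complex.conj_ofReal]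
    have hc : ((x + j : ℝ) : ℂ) = (x : ℂ) + (j : ℂ) := by push_cast; ring
    rw [hc]
    rw [mul_mul_mul_comm, hph j]
    ring
  have hfun : (fun j : ℤ => Complex.exp (2 * π * Complex.I * (m' - m) * x)
      * ((fun l : ℤ => ((_root_.sinc (x - l) : ℂ) * (_root_.sinc (x - l + (n' - n : ℤ)) : ℂ)))
          ∘ (Equiv.subLeft n')) j)
      = fun j : ℤ => Phi m n m' n' (x + j) := by
    funext j
    simp only [Function.comp_apply, Equiv.subLeft_apply]
    have e1 : x - ((n' - j : ℤ) : ℝ) = x + j - n' := by push_cast; ring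
    have e2 : x - ((n' - j : ℤ) : ℝ) + ((n' - n : ℤ) : ℝ) = x + j - n := by push_cast; ring
    rw [e2, e1, hpt j]
  rwa [hfun] at h1

lemma integral_Ioc_exp (k : ℤ) :
    (∫ x in Set.Ioc (0:ℝ) 1, Complex.exp (2 * π * Complex.I * (k : ℂ) * x))
      = if k = 0 then 1 else 0 := by
  rw [← intervalIntegral.integral_of_le zero_le_one]
  have h : (∫ x in (0:ℝ)..1, Complex.exp (2 * π * Complex.I * (k:ℂ) * x)) = phi k := by
    rw [phi]
    norm_cast
  rw [h, phi_eq, sinc_int k]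
  rcases eq_or_ne k 0 with rfl | hk
  · simp
  · simp [hk]

lemma integral_eq_tsum_Ioc {f : ℝ → ℂ} (hf : Integrable f) :
    ∫ x, f x = ∑' j : ℤ, ∫ x in Set.Ioc (j:ℝ) (j+1), f x := by
  rw [← setIntegral_univ, ← iUnion_Ioc_intCast (α := ℝ),
    integral_iUnion (fun j => measurableSet_Ioc) (Set.pairwise_disjoint_Ioc_intCast ℝ)
      (by rw [iUnion_Ioc_intCast]; exact hf.integrableOn)]

lemma setIntegral_shift (f : ℝ → ℂ) (j : ℤ) :
    ∫ x in Set.Ioc (j:ℝ) (j+1), f x = ∫ x in Set.Ioc (0:ℝ) 1, f (x + j) := by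
  rw [← intervalIntegral.integral_of_le (lt_add_one (j:ℝ)).le,
    ← intervalIntegral.integral_of_le zero_le_one,
    intervalIntegral.integral_comp_add_right f (j:ℝ), zero_add, add_comm (1:ℝ) (j:ℝ)]

lemma setLIntegral_shift (f : ℝ → ℝ≥0∞) (j : ℤ) :
    ∫⁻ x in Set.Ioc (0:ℝ) 1, f (x + j) = ∫⁻ x in Set.Ioc (j:ℝ) (j+1), f x := by
  have h := (measurePreserving_add_right volume (j:ℝ)).setLIntegral_comp_preimage_emb
    (MeasurableEquiv.addRight (j:ℝ)).measurableEmbedding f (Set.Ioc (j:ℝ) (j+1))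
  have hset : ((fun x : ℝ => x + (j:ℝ)) ⁻¹' Set.Ioc (j:ℝ) (j+1)) = Set.Ioc (0:ℝ) 1 := by
    ext x
    simp only [Set.mem_preimage, Set.mem_Ioc]
    constructor
    · rintro ⟨ha, hb⟩; constructor <;> linarith
    · rintro ⟨ha, hb⟩; constructor <;> linarith
  rw [hset] at h
  exact h

/-- The Gabor system `{ x ↦ e^{2πi m x} g(x − n) : m, n ∈ ℤ }` with `g = sinc`
is an orthonormal family in `L²(ℝ)`. -/
theorem gabor_sinc_orthonormal (G : ℤ × ℤ → L2R)
    (hG : ∀ m n : ℤ, (G (m, n) : ℝ → ℂ) =ᵐ[volume]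
      fun x => Complex.exp (2 * π * Complex.I * m * x) * (_root_.sinc (x - n) : ℂ)) :
    Orthonormal ℂ G := by
  rw [orthonormal_iff_ite]
  rintro ⟨m, n⟩ ⟨m', n'⟩
  have h1 := hG m n
  have h2 := hG m' n'
  have hae : (fun a => (inner ℂ (G (m,n) a) (G (m',n') a) : ℂ)) =ᵐ[volume] Phi m n m' n' := by
    filter_upwards [h1, h2] with y hy1 hy2
    rw [RCLike.inner_apply', hy1, hy2]
    rfl
  have hint : Integrable (Phi m n m' n') volume :=
    (MeasureTheory.L2.integrable_inner (𝕜 := ℂ) (G (m,n)) (G (m',n'))).congr hae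
  have hval : (inner ℂ (G (m,n)) (G (m',n')) : ℂ) = ∫ x, Phi m n m' n' x := by
    rw [MeasureTheory.L2.inner_def]
    exact integral_congr_ae hae
  -- periodization
  have hswap : ∑' j : ℤ, ∫ x in Set.Ioc (0:ℝ) 1, Phi m n m' n' (x + j)
      = ∫ x in Set.Ioc (0:ℝ) 1, ∑' j : ℤ, Phi m n m' n' (x + j) := by
    refine (MeasureTheory.integral_tsum (f := fun (j : ℤ) (x : ℝ) => Phi m n m' n' (x + j))
      (fun j => Measurable.aestronglyMeasurable (by
        exact (measurable_Phi m n m' n').comp (measurable_id.add measurable_const))) ?_).symm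
    have heq : ∀ j : ℤ, ∫⁻ x in Set.Ioc (0:ℝ) 1, ‖Phi m n m' n' (x + j)‖ₑ
        = ∫⁻ x in Set.Ioc (j:ℝ) (j+1), ‖Phi m n m' n' x‖ₑ :=
      fun j => setLIntegral_shift (fun x => (‖Phi m n m' n' x‖ₑ : ℝ≥0∞)) j
    rw [tsum_congr heq, ← lintegral_iUnion (fun j => measurableSet_Ioc)
      (Set.pairwise_disjoint_Ioc_intCast ℝ), iUnion_Ioc_intCast, setLIntegral_univ]
    exact hint.2.ne
  have hsum : ∀ x : ℝ, ∑' j : ℤ, Phi m n m' n' (x + j)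
      = Complex.exp (2 * π * Complex.I * (m' - m) * x) * (if n = n' then 1 else 0) :=
    fun x => (hasSum_Phi m n m' n' x).tsum_eq
  have hcalc : (∫ x, Phi m n m' n' x)
      = (if m = m' then 1 else 0) * (if n = n' then (1:ℂ) else 0) := by
    rw [integral_eq_tsum_Ioc hint, tsum_congr (fun j => setIntegral_shift (Phi m n m' n') j),
      hswap]
    simp_rw [hsum]
    have hIe : (∫ x in Set.Ioc (0:ℝ) 1, Complex.exp (2 * π * Complex.I * ((m':ℂ) - m) * x))
        = if m = m' then 1 else 0 := by
      have h3 := integral_Ioc_exp (m' - m)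
      rw [show ((m' - m : ℤ) : ℂ) = (m':ℂ) - m by push_cast; ring] at h3
      rw [h3]
      rcases eq_or_ne m m' with rfl | hm
      · simp
      · rw [if_neg (fun h => hm (sub_eq_zero.mp h).symm), if_neg hm]
    rcases eq_or_ne n n' with rfl | hn
    · simp only [eq_self_iff_true, if_true, mul_one]
      rw [hIe]
    · simp [hn]
  rw [hval, hcalc]
  rcases eq_or_ne m m' with rfl | hm
  · rcases eq_or_ne n n' with rfl | hn
    · simp
    · simp [hn, Prod.ext_iff]
  · simp [hm, Prod.ext_iff]
end
end

section
/- Let Ψᵒ(x₁,x₂) = (1/(2π)) χ_{[−π,π]}(x₁) χ_{[−π,π]}(x₂ − x₁). There do not exist measurable functions u, v : ℝ → ℂ such that Ψᵒ(x₁,x₂) = u(x₁) v(x₂) for almost every (x₁,x₂) ∈ ℝ². -/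
open MeasureTheory Complex Real

noncomputable section

/-- The function `Ψᵒ(x₁,x₂) = (1/(2π)) χ_{[−π,π]}(x₁) χ_{[−π,π]}(x₂ − x₁)` is not
factorizable: there are no measurable `u, v : ℝ → ℂ` with
`Ψᵒ(x₁,x₂) = u(x₁)v(x₂)` for almost every `(x₁,x₂) ∈ ℝ²`. -/
theorem strip_indicator_not_factorizable :
    ¬ ∃ (u v : ℝ → ℂ), Measurable u ∧ Measurable v ∧
      (fun x : ℝ × ℝ =>
          ((1 / (2 * π) : ℝ) : ℂ) *
            (Set.indicator (Set.Icc (-π) π) (fun _ => (1 : ℂ)) x.1 *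
              Set.indicator (Set.Icc (-π) π) (fun _ => (1 : ℂ)) (x.2 - x.1)))
        =ᵐ[(volume : Measure (ℝ × ℝ))] fun x : ℝ × ℝ => u x.1 * v x.2 := by
  rintro ⟨u, v, hu, hv, h⟩
  have hπ := Real.pi_pos
  set c : ℂ := ((1 / (2 * π) : ℝ) : ℂ) with hc
  have hc0 : c ≠ 0 := by
    simp only [hc, Ne, Complex.ofReal_eq_zero]
    positivity
  set ψ : ℝ × ℝ → ℂ := fun x : ℝ × ℝ =>
      c * (Set.indicator (Set.Icc (-π) π) (fun _ => (1 : ℂ)) x.1 *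
        Set.indicator (Set.Icc (-π) π) (fun _ => (1 : ℂ)) (x.2 - x.1)) with hψ
  set A : Set ℝ := Set.Icc (-(7 * π / 8)) (-(5 * π / 8)) with hA
  set B : Set ℝ := Set.Icc (5 * π / 8) (7 * π / 8) with hB
  have hmA : MeasurableSet (A ×ˢ A) := (measurableSet_Icc).prod measurableSet_Icc
  have hmB : MeasurableSet (B ×ˢ B) := (measurableSet_Icc).prod measurableSet_Icc
  have hmAB : MeasurableSet (A ×ˢ B) := (measurableSet_Icc).prod measurableSet_Icc
  -- key identity: integral of ψ over a rectangle factorizes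
  have key : ∀ S T : Set ℝ, ∫ x in S ×ˢ T, ψ x =
      (∫ x in S, u x) * ∫ y in T, v y := by
    intro S T
    have h1 : ∫ x in S ×ˢ T, ψ x = ∫ x in S ×ˢ T, u x.1 * v x.2 :=
      integral_congr_ae (ae_restrict_of_ae h)
    rw [h1, Measure.volume_eq_prod]
    exact setIntegral_prod_mul u v S T
  -- volume of the small squares
  have hvol : (volume (A ×ˢ A)).toReal = (π / 4) * (π / 4) := by
    rw [Measure.volume_eq_prod, Measure.prod_prod, hA, Real.volume_Icc]
    have : -(5 * π / 8) - -(7 * π / 8) = π / 4 := by ring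
    rw [this, ← ENNReal.ofReal_mul (by positivity), ENNReal.toReal_ofReal (by positivity)]
  have hvolB : (volume (B ×ˢ B)).toReal = (π / 4) * (π / 4) := by
    rw [Measure.volume_eq_prod, Measure.prod_prod, hB, Real.volume_Icc]
    have : 7 * π / 8 - 5 * π / 8 = π / 4 := by ring
    rw [this, ← ENNReal.ofReal_mul (by positivity), ENNReal.toReal_ofReal (by positivity)]
  -- ψ equals c on A ×ˢ A and on B ×ˢ B, equals 0 on A ×ˢ B
  have hAA : ∫ x in A ×ˢ A, ψ x = ((π / 4) * (π / 4) : ℝ) • c := by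
    rw [setIntegral_congr_fun hmA (g := fun _ => c)
      (fun x hx => by
        obtain ⟨⟨h1, h2⟩, h3, h4⟩ := hx
        have m1 : x.1 ∈ Set.Icc (-π) π := ⟨by linarith, by linarith⟩
        have m2 : x.2 - x.1 ∈ Set.Icc (-π) π := ⟨by linarith, by linarith⟩
        simp [hψ, Set.indicator_of_mem m1, Set.indicator_of_mem m2])]
    rw [setIntegral_const, measureReal_def, hvol]
  have hBB : ∫ x in B ×ˢ B, ψ x = ((π / 4) * (π / 4) : ℝ) • c := by
    rw [setIntegral_congr_fun hmB (g := fun _ => c)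
      (fun x hx => by
        obtain ⟨⟨h1, h2⟩, h3, h4⟩ := hx
        have m1 : x.1 ∈ Set.Icc (-π) π := ⟨by linarith, by linarith⟩
        have m2 : x.2 - x.1 ∈ Set.Icc (-π) π := ⟨by linarith, by linarith⟩
        simp [hψ, Set.indicator_of_mem m1, Set.indicator_of_mem m2])]
    rw [setIntegral_const, measureReal_def, hvolB]
  have hAB : ∫ x in A ×ˢ B, ψ x = 0 := by
    rw [setIntegral_congr_fun hmAB (g := fun _ => (0 : ℂ))
      (fun x hx => by
        obtain ⟨⟨h1, h2⟩, h3, h4⟩ := hx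
        have m2 : x.2 - x.1 ∉ Set.Icc (-π) π := by
          rw [Set.mem_Icc]; push_neg; intro _; linarith
        simp [hψ, Set.indicator_of_notMem m2])]
    exact integral_zero _ _
  have hne : (((π / 4) * (π / 4) : ℝ) • c) ≠ 0 :=
    smul_ne_zero (by positivity) hc0
  have h1 := key A A; rw [hAA] at h1
  have h2 := key B B; rw [hBB] at h2
  have h3 := key A B; rw [hAB] at h3
  have huA : (∫ x in A, u x) ≠ 0 := fun h0 => hne (by rw [h1, h0, zero_mul])
  have hvB : (∫ y in B, v y) ≠ 0 := fun h0 => hne (by rw [h2, h0, mul_zero])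
  exact mul_ne_zero huA hvB h3.symm
end
end
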